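/- Let F be a field, n ≥ 1, and let u, v ∈ F^{n+1} be linearly independent. The kernel of the F-linear map from the space of homogeneous degree-d polynomials in n+1 variables to the space of homogeneous degree-d polynomials in two variables s, t given by P ↦ ((s,t) ↦ P(s·u + t·v)) has dimension binomial(n + d, n) − (d + 1). (This computes h⁰(ℙⁿ, O(d) ⊗ I_ℓ) = h⁰(O(d)) − h⁰(O_ℓ(d)) for a line ℓ, as used in the dimension count bounding the image of the modulus map.) -/

import Mathlib

open MvPolynomial

lemma finrank_homogeneousSubmodule_card (K : Type*) [Field K] (σ : Type*) [Fintype σ]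
    [DecidableEq σ] (d : ℕ) :
    Module.finrank K (homogeneousSubmodule σ K d) = (Fintype.card σ + d - 1).choose d := by
  have e : ↥{m : σ →₀ ℕ | m.degree = d} ≃ Sym σ d :=
    (Equiv.subtypeEquivRight (fun m => by
      simp [Finsupp.degree, Finsupp.sum, Set.mem_setOf_eq]; exact Iff.rfl)).trans (Sym.equivNatSum σ d).symm
  haveI : Fintype ↥{m : σ →₀ ℕ | m.degree = d} := Fintype.ofEquiv _ e.symm
  have hb : homogeneousSubmodule σ K d
      = MvPolynomial.restrictSupport K {m : σ →₀ ℕ | m.degree = d} :=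
    homogeneousSubmodule_eq_finsupp_supported σ K d
  rw [hb, Module.finrank_eq_card_basis
    (MvPolynomial.basisRestrictSupport K {m : σ →₀ ℕ | m.degree = d})]
  rw [Fintype.card_congr e]
  exact Sym.card_sym_eq_choose d

lemma finiteDimensional_homogeneousSubmodule (K : Type*) [Field K] (σ : Type*) [Fintype σ]
    [DecidableEq σ] (d : ℕ) :
    FiniteDimensional K (homogeneousSubmodule σ K d) := by
  have e : ↥{m : σ →₀ ℕ | m.degree = d} ≃ Sym σ d :=
    (Equiv.subtypeEquivRight (fun m => by
      simp [Finsupp.degree, Finsupp.sum, Set.mem_setOf_eq]; exact Iff.rfl)).trans (Sym.equivNatSum σ d).symm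
  haveI : Fintype ↥{m : σ →₀ ℕ | m.degree = d} := Fintype.ofEquiv _ e.symm
  have hb : homogeneousSubmodule σ K d
      = MvPolynomial.restrictSupport K {m : σ →₀ ℕ | m.degree = d} :=
    homogeneousSubmodule_eq_finsupp_supported σ K d
  rw [hb]
  exact Module.Finite.of_basis
    (MvPolynomial.basisRestrictSupport K {m : σ →₀ ℕ | m.degree = d})

/-- the kernel of the restriction map from degree-`d` forms in `n + 1`
variables to binary degree-`d` forms along the line spanned by linearly independent
`u, v` has dimension `(n + d).choose n - (d + 1)`
(this is `h⁰(ℙⁿ, O(d) ⊗ I_ℓ) = h⁰(O(d)) - h⁰(O_ℓ(d))`). -/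
theorem line_ideal_degree_d_dimension (K : Type*) [Field K] (n : ℕ) (hn : 1 ≤ n)
    (u v : Fin (n + 1) → K) (huv : LinearIndependent K ![u, v]) (d : ℕ) :
    Module.finrank K
      ↥(homogeneousSubmodule (Fin (n + 1)) K d ⊓
        LinearMap.ker (aeval (R := K) (fun i : Fin (n + 1) =>
          (C (u i) * X 0 + C (v i) * X 1 : MvPolynomial (Fin 2) K))).toLinearMap) =
      (n + d).choose n - (d + 1) := by
  classical
  set g : Fin (n + 1) → MvPolynomial (Fin 2) K :=
    fun i => C (u i) * X 0 + C (v i) * X 1 with hgdef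
  set T : MvPolynomial (Fin (n + 1)) K →ₗ[K] MvPolynomial (Fin 2) K :=
    (aeval (R := K) g).toLinearMap with hTdef
  set V := homogeneousSubmodule (Fin (n + 1)) K d with hVdef
  set W := homogeneousSubmodule (Fin 2) K d with hWdef
  have hg1 : ∀ i, (g i).IsHomogeneous 1 := fun i =>
    ((isHomogeneous_X K 0).C_mul (u i)).add ((isHomogeneous_X K 1).C_mul (v i))
  have hmaps : ∀ p ∈ V, T p ∈ W := by
    intro p hp
    have := ((mem_homogeneousSubmodule d p).mp hp).aeval g hg1
    rw [one_mul] at this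
    exact this
  set T' : V →ₗ[K] W := T.restrict hmaps with hT'def
  -- the left inverse of the parametrization
  let gmap : (Fin 2 → K) →ₗ[K] (Fin (n + 1) → K) :=
    { toFun := fun c => c 0 • u + c 1 • v
      map_add' := fun a b => by
        funext i; simp [add_smul]; ring
      map_smul' := fun r a => by
        funext i; simp [smul_smul, mul_add]; ring }
  have hinj : LinearMap.ker gmap = ⊥ := by
    rw [LinearMap.ker_eq_bot']
    intro c hc
    have h2 := Fintype.linearIndependent_iff.mp huv ![c 0, c 1] (by
      have : c 0 • u + c 1 • v = 0 := hc
      simpa [Fin.sum_univ_two] using this)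
    funext j
    fin_cases j
    · simpa using h2 0
    · simpa using h2 1
  obtain ⟨h, hh⟩ := gmap.exists_leftInverse_of_injective hinj
  have hu2 : h u = Pi.single 0 1 := by
    have := LinearMap.congr_fun hh (Pi.single (0 : Fin 2) (1 : K))
    simpa [gmap] using this
  have hv2 : h v = Pi.single 1 1 := by
    have := LinearMap.congr_fun hh (Pi.single (1 : Fin 2) (1 : K))
    simpa [gmap] using this
  have hkey : ∀ (x : Fin (n + 1) → K) (j : Fin 2),
      ∑ i, h (Pi.single i 1) j * x i = h x j := by
    intro x j
    have hx : x = ∑ i, x i • (Pi.single i (1 : K) : Fin (n + 1) → K) := by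
      simp_rw [← Pi.single_smul, smul_eq_mul, mul_one]
      exact (Finset.univ_sum_single x).symm
    conv_rhs => rw [hx]
    rw [map_sum]
    simp [mul_comm]
  set ψ : MvPolynomial (Fin 2) K →ₐ[K] MvPolynomial (Fin (n + 1)) K :=
    aeval (fun j : Fin 2 => ∑ i, C (h (Pi.single i 1) j) * X i) with hψdef
  have hcomp : ∀ q, aeval g (ψ q) = q := by
    have hc : (aeval g).comp ψ = AlgHom.id K (MvPolynomial (Fin 2) K) := by
      apply algHom_ext
      intro j
      simp only [AlgHom.comp_apply, hψdef, aeval_X, AlgHom.id_apply, map_sum]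
      have step : ∀ i : Fin (n + 1),
          aeval g (C (h (Pi.single i 1) j) * X i)
          = C (h (Pi.single i 1) j * u i) * X 0 + C (h (Pi.single i 1) j * v i) * X 1 := by
        intro i
        rw [map_mul, aeval_C, aeval_X]
        simp only [hgdef, algebraMap_eq, mul_add, ← mul_assoc, ← C_mul]
      rw [Finset.sum_congr rfl (fun i _ => step i), Finset.sum_add_distrib,
        ← Finset.sum_mul, ← Finset.sum_mul, ← map_sum C, ← map_sum C, hkey u j, hkey v j,
        hu2, hv2]
      fin_cases j <;> simp
    intro q
    exact AlgHom.congr_fun hc q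
  have hrange : LinearMap.range T' = ⊤ := by
    rw [LinearMap.range_eq_top]
    rintro ⟨q, hq⟩
    have hψq : ψ q ∈ V := by
      have := ((mem_homogeneousSubmodule d q).mp hq).aeval
        (fun j : Fin 2 => ∑ i, C (h (Pi.single i 1) j) * X i)
        (fun j => IsHomogeneous.sum _ _ _ (fun i _ => (isHomogeneous_X K i).C_mul _))
      rw [one_mul] at this
      exact this
    refine ⟨⟨ψ q, hψq⟩, Subtype.ext ?_⟩
    simpa [hT'def, LinearMap.restrict_apply, hTdef] using hcomp q
  haveI : FiniteDimensional K V := finiteDimensional_homogeneousSubmodule K (Fin (n + 1)) d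
  have hrn := LinearMap.finrank_range_add_finrank_ker T'
  rw [hrange, finrank_top] at hrn
  have e1 : Module.finrank K V = (n + d).choose n := by
    rw [hVdef, finrank_homogeneousSubmodule_card, Fintype.card_fin]
    have h1 : n + 1 + d - 1 = n + d := by omega
    rw [h1, ← Nat.choose_symm (by omega : d ≤ n + d)]
    congr 1
    omega
  have e2 : Module.finrank K W = d + 1 := by
    rw [hWdef, finrank_homogeneousSubmodule_card, Fintype.card_fin]
    have h1 : 2 + d - 1 = d + 1 := by omega
    rw [h1, ← Nat.choose_symm (by omega : d ≤ d + 1)]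
    simp [Nat.add_sub_cancel_left]
  have keq : Module.finrank K ↥(V ⊓ LinearMap.ker T)
      = Module.finrank K (LinearMap.ker T') := by
    rw [hT'def, LinearMap.ker_restrict]
    have hc : Submodule.comap V.subtype (LinearMap.ker T)
        = Submodule.comap V.subtype (V ⊓ LinearMap.ker T) := by
      rw [Submodule.comap_inf, Submodule.comap_subtype_self, top_inf_eq]
    rw [hc]
    exact (LinearEquiv.finrank_eq (Submodule.comapSubtypeEquivOfLe inf_le_left)).symm
  rw [keq]
  omega
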